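/- Correctness of the 2D algorithm's stopping condition: let p ∈ L and q ∈ R with all points of R lying weakly above the line through p and q (no clockwise turn from (p,q) to any r ∈ R) and all points of L lying weakly above the same line. Then the segment (p,q) lies on the lower convex hull of L ∪ R, i.e., the line through p and q supports L ∪ R from below, and it intersects the y-axis. -/

import Mathlib

/-- Correctness of the stopping condition of the 2D algorithm: let `L` be a
finite nonempty set of points with negative `x`-coordinate and `R` a finite
nonempty set with positive `x`-coordinate, `p ∈ L`, `q ∈ R`.  If no point of
`R` makes a clockwise turn from `(p, q)` and no point of `L` is below the line
through `p` and `q` (expressed via the cross product), then the line through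
`p` and `q` supports `L ∪ R` from below, and the segment `(p, q)` intersects
the `y`-axis. -/
theorem stopping_condition_correct
    (L R : Finset (ℝ × ℝ)) (hLne : L.Nonempty) (hRne : R.Nonempty)
    (hL : ∀ x ∈ L, x.1 < 0) (hR : ∀ x ∈ R, 0 < x.1)
    (p : ℝ × ℝ) (hp : p ∈ L) (q : ℝ × ℝ) (hq : q ∈ R)
    (hRabove : ∀ r ∈ R, 0 ≤ (q.1 - p.1) * (r.2 - p.2) - (q.2 - p.2) * (r.1 - p.1))
    (hLabove : ∀ r ∈ L, 0 ≤ (q.1 - p.1) * (r.2 - p.2) - (q.2 - p.2) * (r.1 - p.1)) :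
    (∀ r ∈ L ∪ R, p.2 + (q.2 - p.2) / (q.1 - p.1) * (r.1 - p.1) ≤ r.2) ∧
    (∃ t ∈ Set.Icc (0 : ℝ) 1, p.1 + t * (q.1 - p.1) = 0) := by
  have hd : 0 < q.1 - p.1 := by
    have := hL p hp; have := hR q hq; linarith
  constructor
  · intro r hr
    have hcross : 0 ≤ (q.1 - p.1) * (r.2 - p.2) - (q.2 - p.2) * (r.1 - p.1) := by
      rcases Finset.mem_union.mp hr with h | h
      · exact hLabove r h
      · exact hRabove r h
    rw [div_mul_eq_mul_div, ← sub_nonneg]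
    have : r.2 - (p.2 + (q.2 - p.2) * (r.1 - p.1) / (q.1 - p.1))
        = ((q.1 - p.1) * (r.2 - p.2) - (q.2 - p.2) * (r.1 - p.1)) / (q.1 - p.1) := by
      field_simp; ring
    rw [this]
    positivity
  · refine ⟨-p.1 / (q.1 - p.1), ⟨?_, ?_⟩, ?_⟩
    · have := hL p hp; apply div_nonneg <;> linarith
    · rw [div_le_one hd]; have := hR q hq; linarith
    · field_simp; ring
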